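/- Let A be a k-algebra over a nonzero commutative ring k. Suppose A is free as a k-module and there exist idempotents e_1, …, e_n of k such that A is isomorphic as a k-algebra to the product ∏_{i=1}^n (e_i·k). Then A is isomorphic as a k-algebra to k^r for some natural number r (namely, the rank of A as a free k-module). -/

import Mathlib

open Finset TensorProduct

section StrongDiagAux
variable {k : Type*} [CommRing k] {n : ℕ}

def epsAux (e : Fin n → k) (S : Finset (Fin n)) : k :=
  (∏ i ∈ S, e i) * ∏ i ∈ Sᶜ, (1 - e i)

variable {e : Fin n → k}

lemma epsAux_idem (he : ∀ i, IsIdempotentElem (e i)) (S : Finset (Fin n)) :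
    epsAux e S * epsAux e S = epsAux e S := by
  unfold epsAux
  have h1 : (∏ i ∈ S, e i) * ∏ i ∈ S, e i = ∏ i ∈ S, e i := by
    rw [← Finset.prod_mul_distrib]; exact Finset.prod_congr rfl fun i _ => he i
  have h2 : (∏ i ∈ Sᶜ, (1 - e i)) * ∏ i ∈ Sᶜ, (1 - e i) = ∏ i ∈ Sᶜ, (1 - e i) := by
    rw [← Finset.prod_mul_distrib]
    exact Finset.prod_congr rfl fun i _ => (he i).one_sub
  linear_combination ((∏ i ∈ Sᶜ, (1 - e i)) * (∏ i ∈ Sᶜ, (1 - e i))) * h1 +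
    (∏ i ∈ S, e i) * h2

lemma epsAux_mul_of_mem_not_mem (he : ∀ i, IsIdempotentElem (e i)) {S T : Finset (Fin n)}
    {i : Fin n} (hiS : i ∈ S) (hiT : i ∉ T) : epsAux e S * epsAux e T = 0 := by
  unfold epsAux
  rw [← Finset.prod_erase_mul S e hiS, ← Finset.prod_erase_mul Tᶜ _ (Finset.mem_compl.mpr hiT)]
  linear_combination (-(∏ j ∈ S.erase i, e j) * (∏ j ∈ Sᶜ, (1 - e j)) * (∏ j ∈ T, e j) *
    (∏ j ∈ Tᶜ.erase i, (1 - e j))) * (he i).eq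

lemma epsAux_orth (he : ∀ i, IsIdempotentElem (e i)) {S T : Finset (Fin n)} (hST : S ≠ T) :
    epsAux e S * epsAux e T = 0 := by
  obtain ⟨i, hi⟩ := Finset.symmDiff_nonempty.mpr hST
  rw [Finset.mem_symmDiff] at hi
  rcases hi with ⟨h1, h2⟩ | ⟨h1, h2⟩
  · exact epsAux_mul_of_mem_not_mem he h1 h2
  · rw [mul_comm]; exact epsAux_mul_of_mem_not_mem he h1 h2

lemma sum_epsAux : ∑ S : Finset (Fin n), epsAux e S = 1 := by
  have h : (1:k) = ∏ i : Fin n, (e i + (1 - e i)) := by simp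
  rw [h, Finset.prod_add, Finset.powerset_univ]
  refine Finset.sum_congr rfl fun S _ => ?_
  rw [epsAux, Finset.compl_eq_univ_sdiff]

lemma epsAux_mul_e_mem (he : ∀ i, IsIdempotentElem (e i)) {S : Finset (Fin n)} {i : Fin n}
    (hi : i ∈ S) : epsAux e S * e i = epsAux e S := by
  unfold epsAux
  rw [← Finset.prod_erase_mul S e hi]
  linear_combination ((∏ j ∈ S.erase i, e j) * ∏ j ∈ Sᶜ, (1 - e j)) * (he i).eq

lemma epsAux_mul_e_not_mem (he : ∀ i, IsIdempotentElem (e i)) {S : Finset (Fin n)} {i : Fin n}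
    (hi : i ∉ S) : epsAux e S * e i = 0 := by
  unfold epsAux
  rw [← Finset.prod_erase_mul Sᶜ _ (Finset.mem_compl.mpr hi)]
  linear_combination (-(∏ j ∈ S, e j) * (∏ j ∈ Sᶜ.erase i, (1 - e j))) * (he i).eq

lemma sum_epsAux_mem (he : ∀ i, IsIdempotentElem (e i)) (i : Fin n) :
    ∑ S : Finset (Fin n), (if i ∈ S then epsAux e S else 0) = e i := by
  have h1 : e i * ∑ S : Finset (Fin n), epsAux e S = e i := by rw [sum_epsAux, mul_one]
  rw [Finset.mul_sum] at h1
  rw [← h1]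
  refine Finset.sum_congr rfl fun S _ => ?_
  split
  · rw [mul_comm]; exact (epsAux_mul_e_mem he (by assumption)).symm
  · rw [mul_comm]; exact (epsAux_mul_e_not_mem he (by assumption)).symm


noncomputable def secIdem (x : k) (hx : IsIdempotentElem x) :
    (k ⧸ Ideal.span {1 - x}) →ₗ[k] k :=
  Submodule.liftQ _ (LinearMap.lsmul k k x) (by
    rw [Ideal.span, Submodule.span_le, Set.singleton_subset_iff]
    simp only [SetLike.mem_coe, LinearMap.mem_ker, LinearMap.lsmul_apply, smul_eq_mul]
    linear_combination -hx.eq)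

@[simp] lemma secIdem_mk (x : k) (hx : IsIdempotentElem x) (a : k) :
    secIdem x hx (Ideal.Quotient.mk _ a) = x * a :=
  rfl

lemma secIdem_mul (x : k) (hx : IsIdempotentElem x) (a b : k ⧸ Ideal.span {1 - x}) :
    secIdem x hx (a * b) = secIdem x hx a * secIdem x hx b := by
  obtain ⟨a, rfl⟩ := Ideal.Quotient.mk_surjective a
  obtain ⟨b, rfl⟩ := Ideal.Quotient.mk_surjective b
  rw [← map_mul, secIdem_mk, secIdem_mk, secIdem_mk]
  linear_combination (-(a*b)) * hx.eq

lemma mk_idem_mul (x : k) (a : k) :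
    Ideal.Quotient.mk (Ideal.span {1 - x}) (x * a) = Ideal.Quotient.mk _ a := by
  rw [Ideal.Quotient.mk_eq_mk_iff_sub_mem, Ideal.mem_span_singleton']
  exact ⟨-a, by ring⟩

lemma mk_one_sub_self (x : k) : Ideal.Quotient.mk (Ideal.span {1 - x}) x = 1 := by
  rw [show (1 : k ⧸ Ideal.span {1 - x}) = Ideal.Quotient.mk _ 1 from rfl,
    Ideal.Quotient.mk_eq_mk_iff_sub_mem, Ideal.mem_span_singleton']
  exact ⟨-1, by ring⟩


/-- If `1 - x ∈ I` then `(k⧸I) ⊗ (k ⧸ (1-x)) ≃ k⧸I`. -/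
noncomputable def tensorEquivOfLe (I : Ideal k) (x : k) (hx : 1 - x ∈ I) :
    ((k ⧸ I) ⊗[k] (k ⧸ Ideal.span {1 - x})) ≃ₗ[k ⧸ I] (k ⧸ I) := by
  have hle : Ideal.span {1 - x} ≤ I := by
    rw [Ideal.span_le, Set.singleton_subset_iff]; exact hx
  let lft : (k ⧸ Ideal.span {1 - x}) →ₗ[k] (k ⧸ I) :=
    Submodule.mapQ _ _ LinearMap.id (by simpa using hle)
  have lft_mk : ∀ y : k, lft (Ideal.Quotient.mk _ y) = Ideal.Quotient.mk I y := fun y => rfl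
  let bil : (k ⧸ I) →ₗ[k ⧸ I] ((k ⧸ Ideal.span {1 - x}) →ₗ[k] (k ⧸ I)) :=
    { toFun := fun c => c • lft
      map_add' := fun a b => add_smul a b lft
      map_smul' := fun c a => mul_smul c a lft }
  let fwd : ((k ⧸ I) ⊗[k] (k ⧸ Ideal.span {1 - x})) →ₗ[k ⧸ I] (k ⧸ I) :=
    TensorProduct.AlgebraTensorModule.lift bil
  let bwd : (k ⧸ I) →ₗ[k ⧸ I] ((k ⧸ I) ⊗[k] (k ⧸ Ideal.span {1 - x})) :=
    { toFun := fun c => c ⊗ₜ 1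
      map_add' := fun a b => TensorProduct.add_tmul a b 1
      map_smul' := fun c a => by simp [TensorProduct.smul_tmul'] }
  refine LinearEquiv.ofLinear fwd bwd (by
    apply LinearMap.ext
    intro c
    show TensorProduct.AlgebraTensorModule.lift bil (c ⊗ₜ 1) = c
    rw [TensorProduct.AlgebraTensorModule.lift_tmul]
    show c • lft 1 = c
    rw [show (1 : k ⧸ Ideal.span {1 - x}) = Ideal.Quotient.mk _ 1 from rfl, lft_mk]
    simp) ?_
  apply LinearMap.ext
  intro z
  induction z using TensorProduct.induction_on with
  | zero => simp
  | add a b ha hb =>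
    simp only [LinearMap.coe_comp, Function.comp_apply, LinearMap.id_coe, id_eq] at ha hb ⊢
    rw [map_add, map_add, ha, hb]
  | tmul c m =>
    obtain ⟨y, rfl⟩ := Ideal.Quotient.mk_surjective m
    simp only [LinearMap.coe_comp, Function.comp_apply, LinearMap.id_coe, id_eq]
    have h1 : fwd (c ⊗ₜ (Ideal.Quotient.mk _ y)) = Ideal.Quotient.mk I y * c := by
      simp [fwd, bil, lft_mk, smul_eq_mul, mul_comm]
    rw [h1]
    show (Ideal.Quotient.mk I y * c) ⊗ₜ (1 : k ⧸ Ideal.span {1 - x}) = _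
    have h2 : Ideal.Quotient.mk I y * c = y • c := by
      rw [Algebra.smul_def, Ideal.Quotient.algebraMap_eq]
    have h3 : (Ideal.Quotient.mk (Ideal.span {1 - x}) y) = y • (1 : k ⧸ Ideal.span {1 - x}) := by
      rw [Algebra.smul_def, Ideal.Quotient.algebraMap_eq, mul_one]
    rw [h2, h3, TensorProduct.smul_tmul]

lemma tensor_subsingleton (I : Ideal k) (x : k) (hx : IsIdempotentElem x) (hxI : x ∈ I) :
    Subsingleton ((k ⧸ I) ⊗[k] (k ⧸ Ideal.span {1 - x})) := by
  have key : ∀ z : (k ⧸ I) ⊗[k] (k ⧸ Ideal.span {1 - x}), z = 0 := by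
    intro z
    induction z using TensorProduct.induction_on with
    | zero => rfl
    | add a b ha hb => rw [ha, hb, add_zero]
    | tmul c m =>
      obtain ⟨y, rfl⟩ := Ideal.Quotient.mk_surjective m
      have h0 : Ideal.Quotient.mk (Ideal.span {1 - x}) y = (x * y) • (1 : k ⧸ Ideal.span {1 - x}) := by
        rw [Algebra.smul_def, Ideal.Quotient.algebraMap_eq, mul_one]
        rw [show Ideal.Quotient.mk (Ideal.span {1 - x}) (x * y) = Ideal.Quotient.mk _ y from ?_]
        · rw [Ideal.Quotient.mk_eq_mk_iff_sub_mem, Ideal.mem_span_singleton']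
          exact ⟨-y, by ring⟩
      rw [h0, ← TensorProduct.smul_tmul]
      have : (x * y) • c = 0 := by
        rw [Algebra.smul_def, Ideal.Quotient.algebraMap_eq,
          Ideal.Quotient.eq_zero_iff_mem.mpr (I.mul_mem_right y hxI), zero_mul]
      rw [this, TensorProduct.zero_tmul]
  exact ⟨fun a b => by rw [key a, key b]⟩


lemma filter_card_eq_finrank {A : Type*} [CommRing A] [Algebra k A] [Nontrivial k]
    [Module.Free k A] [Module.Finite k A] {e : Fin n → k}
    (he : ∀ i, IsIdempotentElem (e i))
    (φ : A ≃ₗ[k] ((i : Fin n) → k ⧸ Ideal.span {1 - e i}))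
    (p : Ideal k) (hp : p.IsMaximal) [DecidablePred fun i : Fin n => 1 - e i ∈ p] :
    (Finset.univ.filter fun i => 1 - e i ∈ p).card = Module.finrank k A := by
  haveI := hp
  let V : Fin n → Type _ := fun i => (k ⧸ p) ⊗[k] (k ⧸ Ideal.span {1 - e i})
  have hcase : ∀ i, 1 - e i ∉ p → e i ∈ p := by
    intro i hi
    have h0 : e i * (1 - e i) ∈ p := by
      rw [show e i * (1 - e i) = 0 by linear_combination -(he i).eq]
      exact p.zero_mem
    exact (hp.isPrime.mem_or_mem h0).resolve_right hi
  haveI hfin : ∀ i, Module.Finite (k ⧸ p) (V i) := by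
    intro i
    by_cases hi : 1 - e i ∈ p
    · exact Module.Finite.equiv (tensorEquivOfLe p (e i) hi).symm
    · haveI := tensor_subsingleton p (e i) (he i) (hcase i hi)
      exact Module.Finite.of_surjective (0 : (k ⧸ p) →ₗ[k ⧸ p] V i)
        (fun v => ⟨0, (Subsingleton.elim _ _)⟩)
  have hrank : ∀ i, Module.finrank (k ⧸ p) (V i) = if 1 - e i ∈ p then 1 else 0 := by
    intro i
    by_cases hi : 1 - e i ∈ p
    · rw [if_pos hi, (tensorEquivOfLe p (e i) hi).finrank_eq, Module.finrank_self]
    · haveI := tensor_subsingleton p (e i) (he i) (hcase i hi)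
      rw [if_neg hi, Module.finrank_zero_of_subsingleton]
  let E : ((k ⧸ p) ⊗[k] A) ≃ₗ[k ⧸ p] ((i : Fin n) → V i) :=
    (LinearEquiv.baseChange k (k ⧸ p) _ _ φ) ≪≫ₗ TensorProduct.piRight k (k ⧸ p) (k ⧸ p) _
  have h1 : Module.finrank (k ⧸ p) ((k ⧸ p) ⊗[k] A) = Module.finrank k A := by
    rw [Module.finrank_eq_card_basis ((Module.finBasis k A).baseChange (k ⧸ p)), Fintype.card_fin]
  haveI : ∀ i, Module.Free (k ⧸ p) (V i) := by
    intro i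
    by_cases hi : 1 - e i ∈ p
    · exact Module.Free.of_equiv (tensorEquivOfLe p (e i) hi).symm
    · haveI := tensor_subsingleton p (e i) (he i) (hcase i hi)
      infer_instance
  have h2 := E.finrank_eq
  rw [h1, Module.finrank_pi_fintype] at h2
  rw [h2, Finset.card_filter]
  exact (Finset.sum_congr rfl fun i _ => (hrank i).symm)

lemma card_eq_finrank {A : Type*} [CommRing A] [Algebra k A] [Nontrivial k]
    [Module.Free k A] [Module.Finite k A] {e : Fin n → k}
    (he : ∀ i, IsIdempotentElem (e i))
    (φ : A ≃ₗ[k] ((i : Fin n) → k ⧸ Ideal.span {1 - e i}))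
    {S : Finset (Fin n)} (hS : epsAux e S ≠ 0) : S.card = Module.finrank k A := by
  classical
  have hne : Ideal.span {1 - epsAux e S} ≠ ⊤ := by
    intro htop
    apply hS
    rw [Ideal.eq_top_iff_one, Ideal.mem_span_singleton'] at htop
    obtain ⟨c, hc⟩ := htop
    have hidem := epsAux_idem he S
    linear_combination (-(epsAux e S)) * hc + (-c) * hidem
  obtain ⟨p, hpmax, hle⟩ := Ideal.exists_le_maximal _ hne
  have hfilter := filter_card_eq_finrank he φ p hpmax
  rw [← hfilter]
  congr 1
  ext i
  simp only [Finset.mem_filter, Finset.mem_univ, true_and]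
  constructor
  · intro hi
    apply hle
    rw [Ideal.mem_span_singleton']
    exact ⟨1 - e i, by linear_combination epsAux_mul_e_mem he hi⟩
  · intro hip
    by_contra hi
    have h1 : e i ∈ p := hle (Ideal.mem_span_singleton'.mpr
      ⟨e i, by linear_combination -(epsAux_mul_e_not_mem he hi)⟩)
    have h2 : (1 : k) ∈ p := by simpa using p.add_mem h1 hip
    exact hpmax.ne_top ((Ideal.eq_top_iff_one _).mpr h2)

variable (e : Fin n → k) (r : ℕ)

/-- the `j`-th element of `S`. -/
def idxAux (S : {S : Finset (Fin n) // S.card = r}) (j : Fin r) : Fin n :=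
  (S.1.orderIsoOfFin S.2 j : Fin n)

lemma idxAux_mem (S : {S : Finset (Fin n) // S.card = r}) (j : Fin r) :
    idxAux r S j ∈ S.1 := (S.1.orderIsoOfFin S.2 j).2

variable (he : ∀ i, IsIdempotentElem (e i))

noncomputable def phiAux (b : (i : Fin n) → k ⧸ Ideal.span {1 - e i}) (j : Fin r) : k :=
  ∑ S : {S : Finset (Fin n) // S.card = r},
    epsAux e S.1 * secIdem (e (idxAux r S j)) (he _) (b (idxAux r S j))

noncomputable def psiAux (c : Fin r → k) (i : Fin n) : k ⧸ Ideal.span {1 - e i} :=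
  Ideal.Quotient.mk _ (∑ S : {S : Finset (Fin n) // S.card = r},
    if hi : i ∈ S.1 then epsAux e S.1 * c ((S.1.orderIsoOfFin S.2).symm ⟨i, hi⟩) else 0)

lemma sub_sum_aux (f : Finset (Fin n) → k) (hf : ∀ S : Finset (Fin n), S.card ≠ r → f S = 0) :
    ∑ S : {S : Finset (Fin n) // S.card = r}, f S.1 = ∑ S : Finset (Fin n), f S := by
  classical
  rw [← Finset.sum_filter_add_sum_filter_not Finset.univ (fun S => S.card = r) f]
  have h1 : ∑ S : {S : Finset (Fin n) // S.card = r}, f S.1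
      = ∑ S ∈ Finset.univ.filter (fun S : Finset (Fin n) => S.card = r), f S :=
    (Finset.sum_subtype _ (fun x => by simp) f).symm
  have h2 : ∑ S ∈ Finset.univ.filter (fun S : Finset (Fin n) => ¬ S.card = r), f S = 0 :=
    Finset.sum_eq_zero fun S hS => hf S (Finset.mem_filter.mp hS).2
  rw [h1, h2, add_zero]

lemma sub_sum_one (hvan : ∀ S : Finset (Fin n), S.card ≠ r → epsAux e S = 0) :
    ∑ S : {S : Finset (Fin n) // S.card = r}, epsAux e S.1 = 1 := by
  rw [sub_sum_aux r (epsAux e) hvan, sum_epsAux]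

lemma sub_sum_mem (he : ∀ i, IsIdempotentElem (e i))
    (hvan : ∀ S : Finset (Fin n), S.card ≠ r → epsAux e S = 0) (i : Fin n) :
    ∑ S : {S : Finset (Fin n) // S.card = r}, (if i ∈ S.1 then epsAux e S.1 else 0) = e i := by
  classical
  rw [sub_sum_aux r (fun S => if i ∈ S then epsAux e S else 0)
    (fun S hS => by show (if i ∈ S then epsAux e S else 0) = 0; rw [hvan S hS]; split <;> rfl), sum_epsAux_mem he i]


lemma subne {r : ℕ} {S T : {S : Finset (Fin n) // S.card = r}} (h : T ≠ S) : T.1 ≠ S.1 :=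
  fun hh => h (Subtype.ext hh)

lemma sec_b_congr (he : ∀ i, IsIdempotentElem (e i)) (b : (i : Fin n) → k ⧸ Ideal.span {1 - e i})
    {i i' : Fin n} (h : i' = i) :
    secIdem (e i') (he i') (b i') = secIdem (e i) (he i) (b i) := by cases h; rfl

lemma phi_psi (he : ∀ i, IsIdempotentElem (e i))
    (hvan : ∀ S : Finset (Fin n), S.card ≠ r → epsAux e S = 0) (c : Fin r → k) (j : Fin r) :
    phiAux e r he (psiAux e r c) j = c j := by
  rw [phiAux]
  have key : ∀ S : {S : Finset (Fin n) // S.card = r},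
      epsAux e S.1 * secIdem (e (idxAux r S j)) (he _) (psiAux e r c (idxAux r S j))
      = epsAux e S.1 * c j := by
    intro S
    rw [psiAux, secIdem_mk, ← mul_assoc, epsAux_mul_e_mem he (idxAux_mem r S j), Finset.mul_sum]
    rw [Finset.sum_eq_single S]
    · rw [dif_pos (idxAux_mem r S j)]
      have hj : (S.1.orderIsoOfFin S.2).symm ⟨idxAux r S j, idxAux_mem r S j⟩ = j := by
        rw [show (⟨idxAux r S j, idxAux_mem r S j⟩ : {x // x ∈ S.1})
          = S.1.orderIsoOfFin S.2 j from Subtype.ext rfl, OrderIso.symm_apply_apply]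
      rw [hj, ← mul_assoc, epsAux_idem he]
    · intro T _ hT
      by_cases hi : idxAux r S j ∈ T.1
      · rw [dif_pos hi, ← mul_assoc, epsAux_orth he (subne hT).symm, zero_mul]
      · rw [dif_neg hi, mul_zero]
    · intro hS; exact absurd (Finset.mem_univ S) hS
  rw [Finset.sum_congr rfl fun S _ => key S, ← Finset.sum_mul, sub_sum_one e r hvan, one_mul]

lemma psi_phi (he : ∀ i, IsIdempotentElem (e i))
    (hvan : ∀ S : Finset (Fin n), S.card ≠ r → epsAux e S = 0)
    (b : (i : Fin n) → k ⧸ Ideal.span {1 - e i}) (i : Fin n) :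
    psiAux e r (phiAux e r he b) i = b i := by
  rw [psiAux]
  have key : ∀ S : {S : Finset (Fin n) // S.card = r},
      (if hi : i ∈ S.1 then
        epsAux e S.1 * phiAux e r he b ((S.1.orderIsoOfFin S.2).symm ⟨i, hi⟩) else 0)
      = (if i ∈ S.1 then epsAux e S.1 else 0) * secIdem (e i) (he i) (b i) := by
    intro S
    by_cases hi : i ∈ S.1
    · rw [dif_pos hi, if_pos hi]
      have hidx : idxAux r S ((S.1.orderIsoOfFin S.2).symm ⟨i, hi⟩) = i := by
        rw [idxAux, OrderIso.apply_symm_apply]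
      rw [phiAux, Finset.mul_sum, Finset.sum_eq_single S]
      · rw [sec_b_congr e he b hidx, ← mul_assoc, epsAux_idem he]
      · intro T _ hT
        rw [← mul_assoc, epsAux_orth he (subne hT).symm, zero_mul]
      · intro hS; exact absurd (Finset.mem_univ S) hS
    · rw [dif_neg hi, if_neg hi, zero_mul]
  rw [Finset.sum_congr rfl fun S _ => key S, ← Finset.sum_mul, sub_sum_mem e r he hvan i]
  obtain ⟨y, hy⟩ := Ideal.Quotient.mk_surjective (b i)
  rw [← hy, secIdem_mk, show e i * (e i * y) = e i * y by linear_combination y * (he i).eq,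
    mk_idem_mul]

noncomputable def mainEquiv (he : ∀ i, IsIdempotentElem (e i))
    (hvan : ∀ S : Finset (Fin n), S.card ≠ r → epsAux e S = 0) :
    ((i : Fin n) → k ⧸ Ideal.span {1 - e i}) ≃ₐ[k] (Fin r → k) where
  toFun := phiAux e r he
  invFun := psiAux e r
  left_inv b := funext fun i => psi_phi e r he hvan b i
  right_inv c := funext fun j => phi_psi e r he hvan c j
  map_mul' b b' := by
    funext j
    show phiAux e r he (b * b') j = phiAux e r he b j * phiAux e r he b' j
    rw [phiAux, phiAux, phiAux, Finset.sum_mul_sum]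
    refine Finset.sum_congr rfl fun S _ => ?_
    rw [Finset.sum_eq_single S]
    · have hbb : (b * b') (idxAux r S j) = b (idxAux r S j) * b' (idxAux r S j) := rfl
      rw [hbb, secIdem_mul]
      linear_combination (-(secIdem (e (idxAux r S j)) (he _) (b (idxAux r S j)) *
        secIdem (e (idxAux r S j)) (he _) (b' (idxAux r S j)))) * epsAux_idem he S.1
    · intro T _ hT
      linear_combination (secIdem (e (idxAux r S j)) (he _) (b (idxAux r S j)) *
        secIdem (e (idxAux r T j)) (he _) (b' (idxAux r T j))) * epsAux_orth he (subne hT).symm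
    · intro hS; exact absurd (Finset.mem_univ S) hS
  map_add' b b' := by
    funext j
    show phiAux e r he (b + b') j = phiAux e r he b j + phiAux e r he b' j
    rw [phiAux, phiAux, phiAux, ← Finset.sum_add_distrib]
    refine Finset.sum_congr rfl fun S _ => ?_
    have hbb : (b + b') (idxAux r S j) = b (idxAux r S j) + b' (idxAux r S j) := rfl
    rw [hbb, map_add, mul_add]
  commutes' c := by
    funext j
    show phiAux e r he (algebraMap k _ c) j = _
    have h1 : ∀ i : Fin n, (algebraMap k ((i : Fin n) → k ⧸ Ideal.span {1 - e i}) c) i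
        = Ideal.Quotient.mk (Ideal.span {1 - e i}) c := fun i => rfl
    have h2 : (algebraMap k (Fin r → k) c) j = c := rfl
    rw [h2, phiAux]
    have key : ∀ S : {S : Finset (Fin n) // S.card = r},
        epsAux e S.1 * secIdem (e (idxAux r S j)) (he _)
          ((algebraMap k ((i : Fin n) → k ⧸ Ideal.span {1 - e i}) c) (idxAux r S j))
        = epsAux e S.1 * c := by
      intro S
      rw [h1, secIdem_mk, ← mul_assoc, epsAux_mul_e_mem he (idxAux_mem r S j)]
    rw [Finset.sum_congr rfl fun S _ => key S, ← Finset.sum_mul, sub_sum_one e r hvan, one_mul]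


end StrongDiagAux

theorem stmt_1 {k A : Type*} [CommRing k] [Nontrivial k] [CommRing A] [Algebra k A]
    [Module.Free k A] (n : ℕ) (e : Fin n → k) (he : ∀ i, IsIdempotentElem (e i))
    (h : Nonempty (A ≃ₐ[k] ((i : Fin n) → k ⧸ Ideal.span {1 - e i}))) :
    ∃ r : ℕ, Nonempty (A ≃ₐ[k] (Fin r → k)) := by
  classical
  obtain ⟨φ⟩ := h
  haveI : ∀ i : Fin n, Module.Finite k (k ⧸ Ideal.span {1 - e i}) := fun i =>
    Module.Finite.of_surjective (Ideal.span {1 - e i}).mkQ (Submodule.mkQ_surjective _)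
  haveI : Module.Finite k ((i : Fin n) → k ⧸ Ideal.span {1 - e i}) := inferInstance
  haveI : Module.Finite k A := Module.Finite.equiv φ.symm.toLinearEquiv
  have hvan : ∀ S : Finset (Fin n), S.card ≠ Module.finrank k A → epsAux e S = 0 := by
    intro S hS
    by_contra h0
    exact hS (card_eq_finrank he φ.toLinearEquiv h0)
  exact ⟨Module.finrank k A, ⟨φ.trans (mainEquiv e (Module.finrank k A) he hvan)⟩⟩
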